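/- arXiv:2505.00129 — 2 statements merged into one kernel-verified Lean document; each statement's English description precedes it below -/
import Mathlib

section
/- Let F be a simplicial function space admitting simplicial extension operators E_m : F̊(T^m) → F(Q^{m+1}) for all m < n, where T^m = {λ ∈ ℝ^{m+1} : λ_i ≥ 0, Σλ_i = 1} and Q^{m+1} = {λ : λ_i ≥ 0, Σλ_i ≤ 1}, such that tr^{Q^{m+1}}_{T^m} E_m is the inclusion and tr^{Q^{m+1}}_S E_m = 0 for every proper face S of Q^{m+1} other than T^m. Then for every simplicial complex 𝒯 of dimension at most n, its face poset 𝔗 admits local extension operators E^𝒯_K : F̊(K) → F(𝒯) for every face K. -/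
open CategoryTheory Opposite

-- A simplicial function space: a contravariant functor from (vertex sets of) simplices
-- with simplicial maps — equivalently, finite sets with arbitrary maps — to real vector
-- spaces.  A simplicial map between simplices is the affine map determined by an
-- arbitrary map of vertex sets.
variable (𝓕 : FintypeCatᵒᵖ ⥤ ModuleCat ℝ)

-- The ambient vertex set of the simplicial complex.
variable {Vt : Type} [DecidableEq Vt]

/-- The inclusion of the vertex set of a subface. -/
def inclF {G F : Finset Vt} (h : G ⊆ F) :
    FintypeCat.of (↥G) ⟶ FintypeCat.of (↥F) :=
  FintypeCat.homMk (fun (x : ↥G) => ⟨x.1, h x.2⟩)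

/-- The value of the simplicial function space on (the simplex with) a vertex set. -/
abbrev Fobj (α : Type) [Fintype α] := 𝓕.obj (op (FintypeCat.of α))

/-- The trace (restriction) map to a subface. -/
def trF {G F : Finset Vt} (h : G ⊆ F) : Fobj 𝓕 ↥F →ₗ[ℝ] Fobj 𝓕 ↥G :=
  (𝓕.map (inclF h).op).hom

/-- The inclusion of a face of a simplex, as a map of vertex sets. -/
def inclA {α : Type} [Fintype α] (S : Finset α) :
    FintypeCat.of (↥S) ⟶ FintypeCat.of α :=
  FintypeCat.homMk (fun (x : ↥S) => x.1)

/-- The vanishing-trace subspace: elements whose trace to every proper (nonempty)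
face vanishes. -/
def vanishA (α : Type) [Fintype α] [DecidableEq α] : Submodule ℝ (Fobj 𝓕 α) where
  carrier := {φ | ∀ S : Finset α, S.Nonempty → S ≠ Finset.univ →
    𝓕.map (inclA S).op φ = 0}
  add_mem' := by intro a b ha hb S h1 h2; simp [map_add, ha S h1 h2, hb S h1 h2]
  zero_mem' := by intro S h1 h2; simp
  smul_mem' := by intro c a ha S h1 h2; simp [map_smul, ha S h1 h2]

/-- The global function space of a simplicial complex with face set `faces`,
as an inverse limit over the face poset. -/
def GlobC (faces : Set (Finset Vt)) :
    Submodule ℝ (∀ F : faces, Fobj 𝓕 ↥F.1) where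
  carrier := {φ | ∀ (G F : faces) (h : G.1 ⊆ F.1), trF 𝓕 h (φ F) = φ G}
  add_mem' := by intro a b ha hb G F h; simp [map_add, ha G F h, hb G F h]
  zero_mem' := by intro G F h; simp
  smul_mem' := by intro c a ha G F h; simp [map_smul, ha G F h]

-- The standard m-simplex T^m has vertex set Fin (m+1); the standard (m+1)-simplex
-- Q^(m+1) has vertex set Fin (m+2), with T^m included as the face missing the last
-- vertex (the origin).
def castMap (m : ℕ) : FintypeCat.of (Fin (m + 1)) ⟶ FintypeCat.of (Fin (m + 2)) :=
  FintypeCat.homMk Fin.castSucc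

-- T^m as a face (vertex subset) of Q^(m+1).
def Tface (m : ℕ) : Finset (Fin (m + 2)) :=
  (Finset.univ : Finset (Fin (m + 1))).image Fin.castSucc

/-! ### Auxiliary lemmas -/

lemma map_map_aux {A B C : FintypeCat} (f : A ⟶ B) (g : B ⟶ C) (φ : 𝓕.obj (op C)) :
    𝓕.map f.op (𝓕.map g.op φ) = 𝓕.map (f ≫ g).op φ := by
  rw [op_comp, 𝓕.map_comp]; rfl

lemma map_id_aux {A : FintypeCat} (f : A ⟶ A) (hf : ∀ a, f a = a) (φ : 𝓕.obj (op A)) :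
    𝓕.map f.op φ = φ := by
  have : f = 𝟙 A := FintypeCat.hom_ext _ _ hf
  rw [this, op_id, 𝓕.map_id]; rfl

/-- If a map of vertex sets lands in a face `S` and `φ` restricts to zero on `S`,
then the pullback of `φ` along the map vanishes. -/
lemma factor_zero {α β : Type} [Fintype α] [Fintype β]
    (f : FintypeCat.of α ⟶ FintypeCat.of β) (S : Finset β)
    (hf : ∀ a, f a ∈ S) (φ : Fobj 𝓕 β)
    (h0 : 𝓕.map (inclA S).op φ = 0) :
    𝓕.map f.op φ = 0 := by
  have hfac : f = (show FintypeCat.of α ⟶ FintypeCat.of ↥S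
      from FintypeCat.homMk fun a => ⟨f a, hf a⟩) ≫ inclA S := rfl
  rw [hfac, ← map_map_aux, h0, map_zero]

/-- The combinatorial analogue of the map `Φ^𝒯_K : 𝒯 → Q^(m+1)`: on a face `F`,
vertices of `K` are sent to their index in `Fin (m+1)` (castSucc'd into `Fin (m+2)`),
all other vertices are sent to the extra vertex (the origin). -/
def projMap (K : Finset Vt) (m : ℕ) (e : ↥K ≃ Fin (m + 1)) (F : Finset Vt) :
    FintypeCat.of ↥F ⟶ FintypeCat.of (Fin (m + 2)) :=
  FintypeCat.homMk fun (v : ↥F) => if h : v.1 ∈ K then (e ⟨v.1, h⟩).castSucc else Fin.last (m + 1)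

lemma projMap_comp (K : Finset Vt) (m : ℕ) (e : ↥K ≃ Fin (m + 1))
    {G F : Finset Vt} (h : G ⊆ F) :
    inclF h ≫ projMap K m e F = projMap K m e G := FintypeCat.hom_ext _ _ (fun _ => rfl)

lemma projMap_self (K : Finset Vt) (m : ℕ) (e : ↥K ≃ Fin (m + 1)) :
    projMap K m e K = (show FintypeCat.of ↥K ⟶ FintypeCat.of (Fin (m + 1))
      from FintypeCat.homMk (e : ↥K → Fin (m + 1))) ≫ castMap m := by
  refine FintypeCat.hom_ext _ _ (fun v => ?_)
  exact dif_pos v.2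

/-- If a simplicial function space admits simplicial extension operators
E_m : F̊(T^m) → F(Q^(m+1)) for all m < n, then the face poset of every simplicial
complex of dimension at most n admits local extension operators. -/
theorem simplicial_extension_operators_yield_local_extension_operators
    (n : ℕ)
    (Em : ∀ m, m < n → (vanishA 𝓕 (Fin (m + 1)) →ₗ[ℝ] Fobj 𝓕 (Fin (m + 2))))
    (hEm1 : ∀ (m) (h : m < n) (ψ : vanishA 𝓕 (Fin (m + 1))),
      𝓕.map (castMap m).op (Em m h ψ) = (ψ : Fobj 𝓕 (Fin (m + 1))))
    (hEm2 : ∀ (m) (h : m < n) (S : Finset (Fin (m + 2))),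
      S.Nonempty → S ≠ Finset.univ → S ≠ Tface m →
      ∀ ψ : vanishA 𝓕 (Fin (m + 1)), 𝓕.map (inclA S).op (Em m h ψ) = 0)
    (faces : Set (Finset Vt))
    (hnonempty : ∀ F ∈ faces, F.Nonempty)
    (hdown : ∀ F ∈ faces, ∀ G : Finset Vt, G ⊆ F → G.Nonempty → G ∈ faces)
    (hdim : ∀ F ∈ faces, F.card ≤ n + 1) :
    ∀ K : faces, ∃ Eloc : vanishA 𝓕 ↥K.1 →ₗ[ℝ] GlobC 𝓕 faces,
      (∀ ψ : vanishA 𝓕 ↥K.1,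
        ((Eloc ψ : ∀ F : faces, Fobj 𝓕 ↥F.1) K) = (ψ : Fobj 𝓕 ↥K.1)) ∧
      (∀ (F : faces), ¬ K.1 ⊆ F.1 → ∀ ψ : vanishA 𝓕 ↥K.1,
        ((Eloc ψ : ∀ F : faces, Fobj 𝓕 ↥F.1) F) = 0) := by
  intro K
  obtain ⟨m, hm⟩ : ∃ m, K.1.card = m + 1 :=
    ⟨K.1.card - 1, (Nat.succ_pred_eq_of_pos (Finset.card_pos.mpr (hnonempty K.1 K.2))).symm⟩
  by_cases hc : m < n
  · -- K is not top-dimensional: use the extension operator Em.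
    -- An enumeration of the vertices of K.
    let e : ↥K.1 ≃ Fin (m + 1) := K.1.equivFin.trans (finCongr hm)
    -- Pull back along the inverse enumeration, landing in the vanishing subspace.
    let fsymm : FintypeCat.of (Fin (m + 1)) ⟶ FintypeCat.of ↥K.1 :=
      FintypeCat.homMk (e.symm : Fin (m + 1) → ↥K.1)
    letI hde1 : DecidableEq ↑(FintypeCat.of { x // x ∈ K.1 }) :=
      (inferInstance : DecidableEq { x // x ∈ K.1 })
    letI hde2 : DecidableEq ↑(FintypeCat.of (Fin (m + 2))) :=
      (inferInstance : DecidableEq (Fin (m + 2)))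
    have hpull : ∀ ψ : vanishA 𝓕 ↥K.1,
        𝓕.map fsymm.op (ψ : Fobj 𝓕 ↥K.1) ∈ vanishA 𝓕 (Fin (m + 1)) := by
      intro ψ S0 hS0 hS0u
      rw [map_map_aux]
      refine factor_zero 𝓕 (β := ↥K.1) _ (S0.image (fun i => e.symm i)) ?_ _ (ψ.2 _ ?_ ?_)
      · intro a
        exact Finset.mem_image_of_mem (fun i => e.symm i) a.2
      · exact hS0.image _
      · intro hEq
        obtain ⟨j, hj⟩ : ∃ j, j ∉ S0 := by
          by_contra hAll
          push_neg at hAll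
          exact hS0u (Finset.eq_univ_iff_forall.mpr hAll)
        apply hj
        have : e.symm j ∈ S0.image (fun i => e.symm i) := by rw [hEq]; exact Finset.mem_univ _
        obtain ⟨i, hi, hii⟩ := Finset.mem_image.mp this
        rwa [← e.symm.injective hii]
    let pull : vanishA 𝓕 ↥K.1 →ₗ[ℝ] vanishA 𝓕 (Fin (m + 1)) :=
      LinearMap.codRestrict (vanishA 𝓕 (Fin (m + 1)))
        (((𝓕.map fsymm.op).hom : Fobj 𝓕 ↥K.1 →ₗ[ℝ] Fobj 𝓕 (Fin (m + 1))).comp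
          (vanishA 𝓕 ↥K.1).subtype) hpull
    let glob : Fobj 𝓕 (Fin (m + 2)) →ₗ[ℝ] (∀ F : faces, Fobj 𝓕 ↥F.1) :=
      LinearMap.pi (fun F => ((𝓕.map (projMap K.1 m e F.1).op).hom :
        Fobj 𝓕 (Fin (m + 2)) →ₗ[ℝ] Fobj 𝓕 ↥F.1))
    have hglob : ∀ ψ : vanishA 𝓕 ↥K.1,
        glob (Em m hc (pull ψ)) ∈ GlobC 𝓕 faces := by
      intro ψ G F h
      show trF 𝓕 h (𝓕.map (projMap K.1 m e F.1).op _) = 𝓕.map (projMap K.1 m e G.1).op _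
      rw [trF, map_map_aux, projMap_comp]
    refine ⟨LinearMap.codRestrict (GlobC 𝓕 faces)
      (glob.comp ((Em m hc).comp pull)) hglob, ?_, ?_⟩
    · -- the trace on K itself is the identity
      intro ψ
      show 𝓕.map (projMap K.1 m e K.1).op (Em m hc (pull ψ)) = (ψ : Fobj 𝓕 ↥K.1)
      rw [projMap_self, ← map_map_aux, hEm1 m hc (pull ψ)]
      show 𝓕.map _ (𝓕.map fsymm.op (ψ : Fobj 𝓕 ↥K.1)) = _
      rw [map_map_aux]
      exact map_id_aux 𝓕 _ (fun a => e.symm_apply_apply a) _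
    · -- the trace on faces not containing K vanishes
      intro F hKF ψ
      show 𝓕.map (projMap K.1 m e F.1).op (Em m hc (pull ψ)) = 0
      obtain ⟨v0, hv0K, hv0F⟩ := Finset.not_subset.mp hKF
      set c : Fin (m + 2) := (e ⟨v0, hv0K⟩).castSucc with hc_def
      refine factor_zero 𝓕 (β := Fin (m + 2)) _ (Finset.univ.erase c) ?_ _
        (hEm2 m hc _ ?_ ?_ ?_ (pull ψ))
      · intro a
        rw [Finset.mem_erase]
        refine ⟨?_, Finset.mem_univ _⟩
        show projMap K.1 m e F.1 a ≠ c
        unfold projMap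
        show (if h : a.1 ∈ K.1 then (e ⟨a.1, h⟩).castSucc else Fin.last (m + 1)) ≠ c
        split
        · next hmem =>
          intro hEq
          apply hv0F
          have h1 := e.injective (Fin.castSucc_injective _ hEq)
          have h2 : a.1 = v0 := congrArg Subtype.val h1
          exact h2 ▸ a.2
        · exact fun hEq => (Fin.castSucc_lt_last _).ne' hEq
      · exact ⟨Fin.last (m + 1), Finset.mem_erase.mpr
          ⟨(Fin.castSucc_lt_last _).ne', Finset.mem_univ _⟩⟩
      · intro hEq
        have : c ∈ Finset.univ.erase c := by rw [hEq]; exact Finset.mem_univ c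
        exact (Finset.notMem_erase c _) this
      · intro hEq
        have hcT : c ∈ Tface m := Finset.mem_image_of_mem _ (Finset.mem_univ _)
        rw [← hEq] at hcT
        exact (Finset.notMem_erase c _) hcT
  · -- K is top-dimensional: extend by zero.
    have hcard : K.1.card = n + 1 := by
      have := hdim K.1 K.2
      omega
    let L : ∀ F : faces, (Fobj 𝓕 ↥K.1 →ₗ[ℝ] Fobj 𝓕 ↥F.1) := fun F =>
      if h : K.1 ⊆ F.1 ∧ F.1 ⊆ K.1 then trF 𝓕 h.2 else 0
    have hKeq : ∀ F : faces, K.1 ⊆ F.1 → K.1 ⊆ F.1 ∧ F.1 ⊆ K.1 := by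
      intro F hKF
      have : F.1 = K.1 :=
        Finset.eq_of_subset_of_card_le ?_ ?_ |>.symm
      · exact ⟨hKF, this.le⟩
      · exact hKF
      · rw [hcard]; exact hdim F.1 F.2
    have hvanish : ∀ (ψ : vanishA 𝓕 ↥K.1) (G : Finset Vt) (hGK : G ⊆ K.1)
        (hGne : G.Nonempty) (hGneq : G ≠ K.1),
        𝓕.map (inclF hGK).op (ψ : Fobj 𝓕 ↥K.1) = 0 := by
      intro ψ G hGK hGne hGneq
      refine factor_zero 𝓕 _ (Finset.univ.filter (fun x : ↥K.1 => x.1 ∈ G)) ?_ _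
        (ψ.2 _ ?_ ?_)
      · intro a
        exact Finset.mem_filter.mpr ⟨Finset.mem_univ _, by exact a.2⟩
      · obtain ⟨g, hg⟩ := hGne
        exact ⟨⟨g, hGK hg⟩, Finset.mem_filter.mpr ⟨Finset.mem_univ _, hg⟩⟩
      · intro hEq
        obtain ⟨v0, hv0K, hv0G⟩ := Finset.exists_of_ssubset (hGK.ssubset_of_ne hGneq)
        have : (⟨v0, hv0K⟩ : ↥K.1) ∈ Finset.univ.filter (fun x : ↥K.1 => x.1 ∈ G) := by
          rw [hEq]; exact Finset.mem_univ _
        exact hv0G (Finset.mem_filter.mp this).2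
    have hglob : ∀ ψ : vanishA 𝓕 ↥K.1,
        (fun F : faces => L F (ψ : Fobj 𝓕 ↥K.1)) ∈ GlobC 𝓕 faces := by
      intro ψ G F h
      show trF 𝓕 h (L F (ψ : Fobj 𝓕 ↥K.1)) = L G (ψ : Fobj 𝓕 ↥K.1)
      by_cases hF : K.1 ⊆ F.1 ∧ F.1 ⊆ K.1
      · by_cases hG : K.1 ⊆ G.1 ∧ G.1 ⊆ K.1
        · simp only [L, dif_pos hF, dif_pos hG]
          rw [trF, trF, trF, map_map_aux]
          congr 1
        · simp only [L, dif_pos hF, dif_neg hG]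
          rw [trF, trF, map_map_aux]
          have hGK : G.1 ⊆ K.1 := h.trans hF.2
          have hGneq : G.1 ≠ K.1 := fun hEq => hG ⟨hEq.ge, hEq.le⟩
          have : inclF h ≫ inclF hF.2 = inclF hGK := by
            refine FintypeCat.hom_ext _ _ (fun a => ?_); exact Subtype.ext rfl
          rw [this]
          exact hvanish ψ G.1 hGK (hnonempty G.1 G.2) hGneq
      · have hG : ¬(K.1 ⊆ G.1 ∧ G.1 ⊆ K.1) := by
          intro hG
          exact hF (hKeq F (hG.1.trans h))
        simp only [L, dif_neg hF, dif_neg hG, LinearMap.zero_apply, map_zero]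
    refine ⟨LinearMap.codRestrict (GlobC 𝓕 faces)
      ((LinearMap.pi L).comp (vanishA 𝓕 ↥K.1).subtype) hglob, ?_, ?_⟩
    · intro ψ
      show L K (ψ : Fobj 𝓕 ↥K.1) = (ψ : Fobj 𝓕 ↥K.1)
      have hK : K.1 ⊆ K.1 ∧ K.1 ⊆ K.1 := ⟨subset_rfl, subset_rfl⟩
      simp only [L, dif_pos hK]
      exact map_id_aux 𝓕 (inclF hK.2) (fun a => Subtype.ext rfl) _
    · intro F hKF ψ
      show L F (ψ : Fobj 𝓕 ↥K.1) = 0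
      have hF : ¬(K.1 ⊆ F.1 ∧ F.1 ⊆ K.1) := fun h => hKF h.1
      simp only [L, dif_neg hF, LinearMap.zero_apply]
end

section
/- For the space P_0Λ^k of constant-coefficient differential k-forms, there is no simplicial extension operator in dimension k: there is no linear map E_k : P̊_0Λ^k(T^k) → P_0Λ^k(Q^{k+1}) whose trace to T^k is the inclusion and whose trace to every other proper face of Q^{k+1} is zero. Concretely: if α = Σ_{i=0}^k a_i (−1)^i dλ_0∧…∧d̂λ_i∧…∧dλ_k is a constant k-form on Q^{k+1} ⊂ ℝ^{k+1} whose pullback to each face Q_i = {λ ∈ Q^{k+1} : λ_i = 0} vanishes, then α = 0, hence its pullback to T^k is also zero rather than the volume form. -/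
open Finset

-- The linear inclusion of the (affine span of the) face Q_i = {λ ∈ Q^(k+1) : λ_i = 0}
-- of Q^(k+1) ⊆ ℝ^(k+1): insert a zero as the i-th coordinate.
def faceIncl (k : ℕ) (i : Fin (k + 1)) : (Fin k → ℝ) →ₗ[ℝ] (Fin (k + 1) → ℝ) where
  toFun x := i.insertNth 0 x
  map_add' a b := by
    funext j
    refine Fin.succAboveCases i ?_ ?_ j <;> simp
  map_smul' c a := by
    funext j
    refine Fin.succAboveCases i ?_ ?_ j <;> simp

-- A linear parametrization of the direction of the face T^k = {λ : Σ λ_i = 1}: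
-- the image of this map is the hyperplane {λ : Σ λ_i = 0} parallel to T^k.
def TIncl (k : ℕ) : (Fin k → ℝ) →ₗ[ℝ] (Fin (k + 1) → ℝ) where
  toFun x := Fin.cons (-(∑ j, x j)) x
  map_add' a b := by
    funext j
    refine Fin.cases ?_ ?_ j <;> simp [Finset.sum_add_distrib] <;> ring
  map_smul' c a := by
    funext j
    refine Fin.cases ?_ ?_ j <;> simp [Finset.mul_sum]

lemma faceIncl_single (k : ℕ) (i : Fin (k + 1)) (m : Fin k) :
    faceIncl k i (Pi.single m 1) = Pi.single (i.succAbove m) 1 := by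
  funext j
  refine Fin.succAboveCases i ?_ ?_ j
  · simp [faceIncl, Pi.single_eq_of_ne (Fin.succAbove_ne i m).symm]
  · intro l
    simp [faceIncl, Pi.single_apply, (Fin.succAbove_right_injective (p := i)).eq_iff]

/-- There is no simplicial extension operator for P₀Λ^k in dimension k: any
constant-coefficient k-form α on ℝ^(k+1) whose pullback to (the affine span of) each
face Q_i of Q^(k+1) vanishes is itself zero; in particular its pullback to (the
direction of) the face T^k is zero rather than the volume form, so no constant k-form
on Q^(k+1) can have trace zero on every Q_i while having nonzero trace on T^k. -/
theorem no_simplicial_extension_for_constant_forms (k : ℕ) :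
    (∀ α : AlternatingMap ℝ (Fin (k + 1) → ℝ) ℝ (Fin k),
      (∀ i : Fin (k + 1), α.compLinearMap (faceIncl k i) = 0) → α = 0) ∧
    ¬ ∃ α : AlternatingMap ℝ (Fin (k + 1) → ℝ) ℝ (Fin k),
        (∀ i : Fin (k + 1), α.compLinearMap (faceIncl k i) = 0) ∧
        α.compLinearMap (TIncl k) ≠ 0 := by
  have main : ∀ α : AlternatingMap ℝ (Fin (k + 1) → ℝ) ℝ (Fin k),
      (∀ i : Fin (k + 1), α.compLinearMap (faceIncl k i) = 0) → α = 0 := by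
    intro α hα
    refine Module.Basis.ext_alternating (Pi.basisFun ℝ (Fin (k + 1))) fun v hv => ?_
    -- find i not in range of v
    have hns : ¬ Function.Surjective v := fun hs => by
      have := Fintype.card_le_of_surjective v hs
      simp at this
    rw [Function.Surjective] at hns
    push_neg at hns
    obtain ⟨i, hi⟩ := hns
    choose w hw using fun j => Fin.exists_succAbove_eq (fun h => hi j h)
    have : (α fun j => (Pi.basisFun ℝ (Fin (k+1))) (v j)) =
        (α.compLinearMap (faceIncl k i)) fun j => Pi.single (w j) 1 := by
      simp only [AlternatingMap.compLinearMap_apply, faceIncl_single, hw, Pi.basisFun_apply]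
    rw [this, hα i]
    simp
  refine ⟨main, ?_⟩
  rintro ⟨α, hα, hT⟩
  exact hT (by rw [main α hα]; ext; simp)
end
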